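/- Let F be the trilinear map interpolating the eight nodes a^(1)=(0,0,0), a^(2)=(1,0,0), a^(3)=(3/4,3/4,0), a^(4)=(0,1,0), a^(5)=(0,0,1), a^(6)=(1/2,0,1), a^(7)=(3/8,3/8,1), a^(8)=(0,1/2,1). Let v(x) = 64 x1(1−x1)x2(1−x2)x3(1−x3)·e3 and q(x) = x1. Then v(x) · (∂_2 F(x) × ∂_3 F(x)) = 4 x1^2(1−x1)(x1−4) x2(1−x2) x3(1−x3)(x3−2), which is not in Q_3([0,1]^3) (it has degree 4 in x1). -/

import Mathlib

open MvPolynomial Matrix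

/-- `p ∈ Q_m`: polynomial of degree at most `m` in each of the three variables. -/
def memQ3 (m : ℕ) (p : MvPolynomial (Fin 3) ℝ) : Prop :=
  ∀ i : Fin 3, degreeOf i p ≤ m

/-- The trilinear interpolant of eight nodes `a 0, …, a 7` placed at the vertices
`(0,0,0),(1,0,0),(1,1,0),(0,1,0),(0,0,1),(1,0,1),(1,1,1),(0,1,1)` of the unit cube. -/
noncomputable def trilinear (a : Fin 8 → Fin 3 → ℝ) (i : Fin 3) :
    MvPolynomial (Fin 3) ℝ :=
  (1 - X 0) * (1 - X 1) * (1 - X 2) * C (a 0 i) +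
  X 0 * (1 - X 1) * (1 - X 2) * C (a 1 i) +
  X 0 * X 1 * (1 - X 2) * C (a 2 i) +
  (1 - X 0) * X 1 * (1 - X 2) * C (a 3 i) +
  (1 - X 0) * (1 - X 1) * X 2 * C (a 4 i) +
  X 0 * (1 - X 1) * X 2 * C (a 5 i) +
  X 0 * X 1 * X 2 * C (a 6 i) +
  (1 - X 0) * X 1 * X 2 * C (a 7 i)

/-- The nodes of the counterexample hexahedron. -/
noncomputable def exNodes : Fin 8 → Fin 3 → ℝ :=
  ![![0, 0, 0], ![1, 0, 0], ![3/4, 3/4, 0], ![0, 1, 0],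
    ![0, 0, 1], ![1/2, 0, 1], ![3/8, 3/8, 1], ![0, 1/2, 1]]

/-- `v(x) = 64 x₁(1-x₁)x₂(1-x₂)x₃(1-x₃) e₃ ∈ Q₂([0,1]³)³`. -/
noncomputable def exV : Fin 3 → MvPolynomial (Fin 3) ℝ :=
  ![0, 0, 64 * (X 0 * (1 - X 0) * (X 1 * (1 - X 1)) * (X 2 * (1 - X 2)))]

lemma aux_hF0 : trilinear exNodes 0 =
    X 0 * (1 - X 1) * (1 - X 2) + C (3/4) * (X 0 * X 1 * (1 - X 2)) +
      C (1/2) * (X 0 * (1 - X 1) * X 2) + C (3/8) * (X 0 * X 1 * X 2) := by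
  unfold trilinear
  rw [show exNodes 0 0 = 0 from rfl, show exNodes 1 0 = 1 from rfl,
    show exNodes 2 0 = 3/4 from rfl, show exNodes 3 0 = 0 from rfl,
    show exNodes 4 0 = 0 from rfl, show exNodes 5 0 = 1/2 from rfl,
    show exNodes 6 0 = 3/8 from rfl, show exNodes 7 0 = 0 from rfl]
  simp only [C_0, C_1]
  ring

lemma aux_hF1 : trilinear exNodes 1 =
    C (3/4) * (X 0 * X 1 * (1 - X 2)) + (1 - X 0) * X 1 * (1 - X 2) +
      C (3/8) * (X 0 * X 1 * X 2) + C (1/2) * ((1 - X 0) * X 1 * X 2) := by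
  unfold trilinear
  rw [show exNodes 0 1 = 0 from rfl, show exNodes 1 1 = 0 from rfl,
    show exNodes 2 1 = 3/4 from rfl, show exNodes 3 1 = 1 from rfl,
    show exNodes 4 1 = 0 from rfl, show exNodes 5 1 = 0 from rfl,
    show exNodes 6 1 = 3/8 from rfl, show exNodes 7 1 = 1/2 from rfl]
  simp only [C_0, C_1]
  ring

lemma aux_hF2 : trilinear exNodes 2 = X 2 := by
  unfold trilinear
  rw [show exNodes 0 2 = 0 from rfl, show exNodes 1 2 = 0 from rfl,
    show exNodes 2 2 = 0 from rfl, show exNodes 3 2 = 0 from rfl,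
    show exNodes 4 2 = 1 from rfl, show exNodes 5 2 = 1 from rfl,
    show exNodes 6 2 = 1 from rfl, show exNodes 7 2 = 1 from rfl]
  simp only [C_0, C_1]
  ring

set_option maxHeartbeats 1000000 in
lemma aux_key :
    (∑ i : Fin 3, exV i *
        (((fun l => pderiv 1 (trilinear exNodes l)) ⨯₃
          (fun l => pderiv 2 (trilinear exNodes l))) i))
      = 4 * (X 0) ^ 2 * (1 - X 0) * (X 0 - 4) * (X 1 * (1 - X 1)) *
          (X 2 * (1 - X 2)) * (X 2 - 2) := by
  simp only [Fin.sum_univ_three, cross_apply]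
  simp only [exV, Matrix.cons_val_zero, Matrix.cons_val_one, Matrix.head_cons,
    Matrix.cons_val_two, Matrix.tail_cons, aux_hF0, aux_hF1, aux_hF2]
  simp only [map_add, map_sub, C_1, Derivation.leibniz, pderiv_X, pderiv_C,
    Pi.single_apply, smul_eq_mul, Derivation.map_one_eq_zero, reduceIte, if_true,
    show ((0:Fin 3) = 1) = False by decide, show ((0:Fin 3) = 2) = False by decide,
    show ((1:Fin 3) = 0) = False by decide, show ((1:Fin 3) = 2) = False by decide,
    show ((2:Fin 3) = 0) = False by decide, show ((2:Fin 3) = 1) = False by decide, if_false,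
    mul_zero, zero_mul, mul_one, one_mul, add_zero, zero_add, sub_zero, zero_sub]
  apply MvPolynomial.funext
  intro x
  simp only [map_add, map_sub, _root_.map_mul, _root_.map_one, map_neg, map_ofNat, eval_X, eval_C,
    map_pow]
  ring

noncomputable def auxP : MvPolynomial (Fin 3) ℝ :=
  4 * (X 0) ^ 2 * (1 - X 0) * (X 0 - 4) * (X 1 * (1 - X 1)) *
          (X 2 * (1 - X 2)) * (X 2 - 2)

noncomputable def auxg : MvPolynomial (Fin 2) ℝ :=
  (X 0 * (1 - X 0)) * (X 1 * (1 - X 1)) * (X 1 - 2)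

lemma aux_hg : auxg ≠ 0 := by
  intro h
  have := congrArg (MvPolynomial.eval (fun _ => (1/2 : ℝ))) h
  simp [auxg] at this
  norm_num at this

lemma aux_him : MvPolynomial.finSuccEquiv ℝ 2 auxP =
    (4 * Polynomial.X ^ 2 * (1 - Polynomial.X) * (Polynomial.X - Polynomial.C 4)) *
      Polynomial.C auxg := by
  rw [show auxP = 4 * (X 0) ^ 2 * (1 - X 0) * (X 0 - 4) *
      (X (Fin.succ 0) * (1 - X (Fin.succ 0))) *
      (X (Fin.succ 1) * (1 - X (Fin.succ 1))) * (X (Fin.succ 1) - 2) from rfl]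
  simp only [_root_.map_mul, map_sub, _root_.map_one, map_ofNat, map_pow,
    MvPolynomial.finSuccEquiv_X_zero, MvPolynomial.finSuccEquiv_X_succ, auxg]
  ring

lemma aux_h4 : (4 * Polynomial.X ^ 2 * (1 - Polynomial.X) *
    (Polynomial.X - Polynomial.C 4) : Polynomial (MvPolynomial (Fin 2) ℝ)).natDegree = 4 := by
  compute_degree!

lemma aux_degP : degreeOf 0 auxP = 4 := by
  have h4' := aux_h4
  rw [← natDegree_finSuccEquiv, aux_him, Polynomial.natDegree_mul ?h1 ?h2,
    Polynomial.natDegree_C, aux_h4]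
  case h1 => intro h; rw [h] at h4'; simp at h4'
  case h2 => simpa using aux_hg

theorem stmt_11 :
    (∑ i : Fin 3, exV i *
        (((fun l => pderiv 1 (trilinear exNodes l)) ⨯₃
          (fun l => pderiv 2 (trilinear exNodes l))) i))
      = 4 * (X 0) ^ 2 * (1 - X 0) * (X 0 - 4) * (X 1 * (1 - X 1)) *
          (X 2 * (1 - X 2)) * (X 2 - 2) ∧
    degreeOf 0 (∑ i : Fin 3, exV i *
        (((fun l => pderiv 1 (trilinear exNodes l)) ⨯₃
          (fun l => pderiv 2 (trilinear exNodes l))) i)) = 4 ∧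
    ¬ memQ3 3 (∑ i : Fin 3, exV i *
        (((fun l => pderiv 1 (trilinear exNodes l)) ⨯₃
          (fun l => pderiv 2 (trilinear exNodes l))) i)) := by
  have hdeg : degreeOf 0 (∑ i : Fin 3, exV i *
      (((fun l => pderiv 1 (trilinear exNodes l)) ⨯₃
        (fun l => pderiv 2 (trilinear exNodes l))) i)) = 4 := by
    rw [aux_key]; exact aux_degP
  refine ⟨aux_key, hdeg, fun h => ?_⟩
  have := h 0
  omega
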